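/- arXiv:1104.0748 — 3 statements merged into one kernel-verified Lean document; each statement's English description precedes it below -/
import Mathlib

section
/- Let E be a Banach scale on (0,S], let τ ∈ (0,S], and let u : E → E be a 1-bounded τ-morphism with constant C. Then for every n ≥ 1 the n-fold composition u^n satisfies ‖u^n x‖_s ≤ n! · 3^n · C^n · σ^{-n} ‖x‖_{s+σ} for all s, σ > 0 with s + σ ≤ τ and all x ∈ E_{s+σ}. -/
open Filter

/-- A Banach scale on the interval `(0,S]`: a real vector space `E` with a decreasing
family of subspaces `E_s = {x | Mem s x}` for `s ∈ (0,S]`, each equipped with a complete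
norm `norm s`, such that the inclusions `E_{s'} ⊆ E_s` (for `s ≤ s'`) have norm at most
`1`. -/
structure BanachScale (E : Type*) [AddCommGroup E] [Module ℝ E] (S : ℝ) where
  /-- membership in `E_s` -/
  Mem : ℝ → E → Prop
  /-- the norm on `E_s` (junk value outside `E_s`) -/
  norm : ℝ → E → ℝ
  mem_zero : ∀ s, Mem s 0
  mem_add : ∀ s x y, Mem s x → Mem s y → Mem s (x + y)
  mem_smul : ∀ s (c : ℝ) x, Mem s x → Mem s (c • x)
  mem_mono : ∀ s s' x, 0 < s → s ≤ s' → Mem s' x → Mem s x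
  norm_nonneg : ∀ s x, 0 ≤ norm s x
  norm_zero : ∀ s, norm s 0 = 0
  norm_eq_zero : ∀ s x, 0 < s → s ≤ S → Mem s x → norm s x = 0 → x = 0
  norm_add : ∀ s x y, norm s (x + y) ≤ norm s x + norm s y
  norm_smul : ∀ s (c : ℝ) x, norm s (c • x) = |c| * norm s x
  norm_mono : ∀ s s' x, 0 < s → s ≤ s' → s' ≤ S → Mem s' x → norm s x ≤ norm s' x
  complete : ∀ s, 0 < s → s ≤ S → ∀ x : ℕ → E, (∀ n, Mem s (x n)) →
    (∀ ε : ℝ, 0 < ε → ∃ N : ℕ, ∀ m ≥ N, ∀ n ≥ N, norm s (x m - x n) ≤ ε) →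
    ∃ y, Mem s y ∧ Tendsto (fun n => norm s (x n - y)) atTop (nhds 0)

namespace BanachScale

variable {E : Type*} [AddCommGroup E] [Module ℝ E] {S : ℝ}

/-- `u` is a `k`-bounded `τ`-morphism with constant `C`:
`u(E_{s+σ}) ⊆ E_s` and `‖u x‖_s ≤ C σ^{-k} ‖x‖_{s+σ}` whenever `0 < s`, `0 < σ`,
`s + σ ≤ τ`. -/
def IsBounded (sc : BanachScale E S) (τ : ℝ) (k : ℕ) (C : ℝ)
    (u : Module.End ℝ E) : Prop :=
  ∀ s σ : ℝ, 0 < s → 0 < σ → s + σ ≤ τ → ∀ x, sc.Mem (s + σ) x →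
    sc.Mem s (u x) ∧ sc.norm s (u x) ≤ C / σ ^ k * sc.norm (s + σ) x

/-- Convergence of a sequence to `y` in the Banach space `E_s`. -/
def ConvergesTo (sc : BanachScale E S) (s : ℝ) (x : ℕ → E) (y : E) : Prop :=
  (∀ n, sc.Mem s (x n)) ∧ sc.Mem s y ∧
    Tendsto (fun n => sc.norm s (x n - y)) atTop (nhds 0)

/-- Partial sums of the exponential series `Σ_j u^j x / j!`. -/
noncomputable def expPartial (u : Module.End ℝ E) (x : E) (N : ℕ) : E :=
  ∑ j ∈ Finset.range N, ((j.factorial : ℝ))⁻¹ • (u ^ j) x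

/-- The sum `e^u x` of the exponential series, when it converges at some level of the
scale (an arbitrary default value otherwise). -/
noncomputable def expMap (sc : BanachScale E S) (u : Module.End ℝ E) (x : E) : E :=
  open scoped Classical in
  if h : ∃ y, ∃ s, 0 < s ∧ s ≤ S ∧ sc.ConvergesTo s (expPartial u x) y then
    h.choose
  else 0

/-- `N_s(u)`: the infimum of the constants `C` such that `u` is a `1`-bounded
`s`-morphism with constant `C`. -/
noncomputable def Nval (sc : BanachScale E S) (s : ℝ) (u : Module.End ℝ E) : ℝ :=
  sInf {C | 0 ≤ C ∧ ∀ s' σ : ℝ, 0 < s' → 0 < σ → s' + σ ≤ s → ∀ x,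
    sc.Mem (s' + σ) x →
      sc.Mem s' (u x) ∧ sc.norm s' (u x) ≤ C / σ * sc.norm (s' + σ) x}

end BanachScale

open BanachScale

lemma pow_le_factorial_mul_three_pow (n : ℕ) : (n : ℝ) ^ n ≤ (n.factorial : ℝ) * 3 ^ n := by
  have hfac : (0:ℝ) < (n.factorial : ℝ) := by exact_mod_cast n.factorial_pos
  have h1 : (n : ℝ) ^ n / (n.factorial : ℝ) ≤ Real.exp n := by
    calc (n : ℝ) ^ n / (n.factorial : ℝ)
        ≤ ∑ i ∈ Finset.range (n+1), (n : ℝ) ^ i / (i.factorial : ℝ) := by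
          refine Finset.single_le_sum (f := fun i => (n : ℝ) ^ i / (i.factorial : ℝ))
            (fun i _ => by positivity) (Finset.self_mem_range_succ n)
      _ ≤ Real.exp n := Real.sum_le_exp_of_nonneg (Nat.cast_nonneg n) _
  have h2 : Real.exp (n : ℝ) ≤ 3 ^ n := by
    rw [← Real.exp_one_rpow (n : ℝ), Real.rpow_natCast]
    exact pow_le_pow_left₀ (Real.exp_pos 1).le
      (by linarith [Real.exp_one_lt_d9]) n
  calc (n : ℝ) ^ n = ((n : ℝ) ^ n / (n.factorial : ℝ)) * (n.factorial : ℝ) := by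
        field_simp
    _ ≤ (3 ^ n) * (n.factorial : ℝ) := by
        exact mul_le_mul_of_nonneg_right (h1.trans h2) hfac.le
    _ = (n.factorial : ℝ) * 3 ^ n := by ring

/-- If `u` is a `1`-bounded `τ`-morphism with constant `C`, then for all `n ≥ 1` the
`n`-fold composition satisfies `‖uⁿ x‖_s ≤ n!·3ⁿ·Cⁿ·σ^{-n}·‖x‖_{s+σ}`. -/
theorem pow_isBounded {E : Type*} [AddCommGroup E] [Module ℝ E] {S : ℝ} (hS : 0 < S)
    (sc : BanachScale E S) (τ : ℝ) (hτ0 : 0 < τ) (hτS : τ ≤ S)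
    (u : Module.End ℝ E) (C : ℝ) (hC : 0 ≤ C)
    (hu : sc.IsBounded τ 1 C u) :
    ∀ n : ℕ, 1 ≤ n → ∀ s σ : ℝ, 0 < s → 0 < σ → s + σ ≤ τ → ∀ x, sc.Mem (s + σ) x →
      sc.Mem s ((u ^ n) x) ∧
      sc.norm s ((u ^ n) x) ≤
        (n.factorial : ℝ) * 3 ^ n * C ^ n / σ ^ n * sc.norm (s + σ) x := by
  have key : ∀ n : ℕ, ∀ s σ : ℝ, 0 < s → 0 < σ → s + σ ≤ τ → ∀ x, sc.Mem (s + σ) x →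
      sc.Mem s ((u ^ n) x) ∧
      sc.norm s ((u ^ n) x) ≤ C ^ n * (n : ℝ) ^ n / σ ^ n * sc.norm (s + σ) x := by
    intro n
    induction n with
    | zero =>
      intro s σ hs hσ hsσ x hx
      have h0 : (u ^ 0) x = x := rfl
      rw [h0]
      constructor
      · exact sc.mem_mono s (s + σ) x hs (by linarith) hx
      · have := sc.norm_mono s (s + σ) x hs (by linarith) (by linarith) hx
        simpa using this
    | succ n ih =>
      intro s σ hs hσ hsσ x hx
      rcases Nat.eq_zero_or_pos n with rfl | hn
      · simp only [zero_add, pow_one]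
        have h1 := hu s σ hs hσ hsσ x hx
        refine ⟨h1.1, ?_⟩
        calc sc.norm s (u x) ≤ C / σ ^ 1 * sc.norm (s + σ) x := h1.2
          _ = C * ((1:ℕ):ℝ) / σ * sc.norm (s + σ) x := by norm_num
      · set δ : ℝ := σ / (n + 1) with hδdef
        set σ' : ℝ := σ * n / (n + 1) with hσ'def
        have hn1 : (0:ℝ) < (n:ℝ) + 1 := by positivity
        have hδ : 0 < δ := by positivity
        have hσ' : 0 < σ' := by
          have : (0:ℝ) < (n:ℝ) := by exact_mod_cast hn
          positivity
        have hsum : s + δ + σ' = s + σ := by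
          rw [hδdef, hσ'def]; field_simp; ring
        have hmem' : sc.Mem (s + δ + σ') x := by rw [hsum]; exact hx
        have hih := ih (s + δ) σ' (by linarith) hσ' (by rw [hsum]; exact hsσ) x hmem'
        have hu1 := hu s δ hs hδ (by linarith [hsum, hsσ, hσ'.le]) ((u ^ n) x) hih.1
        have happ : (u ^ (n + 1)) x = u ((u ^ n) x) := by
          rw [pow_succ']; rfl
        rw [happ]
        refine ⟨hu1.1, ?_⟩
        have hnorm_nonneg := sc.norm_nonneg (s + σ) x
        have hCδ : (0:ℝ) ≤ C / δ ^ 1 := by positivity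
        calc sc.norm s (u ((u ^ n) x)) ≤ C / δ ^ 1 * sc.norm (s + δ) ((u ^ n) x) :=
              hu1.2
          _ ≤ C / δ ^ 1 * (C ^ n * (n : ℝ) ^ n / σ' ^ n * sc.norm (s + δ + σ') x) :=
              mul_le_mul_of_nonneg_left hih.2 hCδ
          _ = C ^ (n+1) * ((n:ℝ)+1) ^ (n+1) / σ ^ (n+1) * sc.norm (s + σ) x := by
              rw [hsum]
              have hnn : (0:ℝ) < (n:ℝ) := by exact_mod_cast hn
              have e1 : σ' ^ n = σ ^ n * (n:ℝ) ^ n / ((n:ℝ)+1) ^ n := by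
                rw [hσ'def, div_pow, mul_pow]
              rw [e1, hδdef]
              field_simp
              ring
          _ = C ^ (n+1) * ((n+1 : ℕ):ℝ) ^ (n+1) / σ ^ (n+1) * sc.norm (s + σ) x := by
              push_cast; ring
  intro n hn s σ hs hσ hsσ x hx
  obtain ⟨hmem, hbound⟩ := key n s σ hs hσ hsσ x hx
  refine ⟨hmem, hbound.trans ?_⟩
  have h3 := pow_le_factorial_mul_three_pow n
  have hfac : C ^ n * (n:ℝ) ^ n / σ ^ n ≤ (n.factorial : ℝ) * 3 ^ n * C ^ n / σ ^ n := by
    apply div_le_div_of_nonneg_right ?_ (by positivity)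
    calc C ^ n * (n:ℝ) ^ n ≤ C ^ n * ((n.factorial : ℝ) * 3 ^ n) :=
          mul_le_mul_of_nonneg_left h3 (by positivity)
      _ = (n.factorial : ℝ) * 3 ^ n * C ^ n := by ring
  exact mul_le_mul_of_nonneg_right hfac (sc.norm_nonneg _ _)
end

section
/- Let E be a Banach scale on (0,S], let τ ∈ (0,S], and let u : E → E be a 1-bounded τ-morphism with constant C. Fix s ∈ (0,τ] with 3C < s and let λ ∈ (0, 1 − 3C/s). Then for every x ∈ E_s the series e^u x := Σ_{j≥0} u^j x / j! converges absolutely in the Banach space E_{λs}, and ‖e^u x‖_{λs} ≤ Σ_{j≥0} (3C)^j / ((1−λ)^j s^j) · ‖x‖_s = (1 − 3C/((1−λ)s))^{-1} ‖x‖_s. -/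
open Filter

open BanachScale


private lemma pow_self_le_aux (j : ℕ) : (j : ℝ) ^ j ≤ 3 ^ j * j.factorial := by
  have hf : (0:ℝ) < j.factorial := by exact_mod_cast j.factorial_pos
  have h1 : (j:ℝ)^j / j.factorial ≤ Real.exp j := by
    calc (j:ℝ)^j / j.factorial
        ≤ ∑ i ∈ Finset.range (j+1), (j:ℝ)^i / i.factorial := by
          refine Finset.single_le_sum (f := fun i => (j:ℝ)^i / (i.factorial : ℝ)) ?_
            (Finset.self_mem_range_succ j)
          intro i _
          positivity
      _ ≤ Real.exp j := Real.sum_le_exp_of_nonneg (by positivity) _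
  have h2 : Real.exp j ≤ 3 ^ j := by
    have : Real.exp ((j : ℝ) * 1) = Real.exp 1 ^ j := Real.exp_nat_mul 1 j
    rw [mul_one] at this
    rw [this]
    exact pow_le_pow_left₀ (Real.exp_pos 1).le (by linarith [Real.exp_one_lt_d9]) j
  calc (j:ℝ)^j = ((j:ℝ)^j / j.factorial) * j.factorial := by field_simp
    _ ≤ 3^j * j.factorial := mul_le_mul_of_nonneg_right (h1.trans h2) hf.le

private lemma iter_bound {E : Type*} [AddCommGroup E] [Module ℝ E] {S : ℝ}
    (sc : BanachScale E S) (τ : ℝ) (u : Module.End ℝ E) (C : ℝ) (hC : 0 ≤ C)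
    (hu : sc.IsBounded τ 1 C u) :
    ∀ (j : ℕ) (t σ : ℝ) (x : E), 0 < t → 0 < σ → t + j * σ ≤ τ → sc.Mem (t + j * σ) x →
      sc.Mem t ((u ^ j) x) ∧ sc.norm t ((u ^ j) x) ≤ (C / σ) ^ j * sc.norm (t + j * σ) x := by
  intro j
  induction j with
  | zero =>
    intro t σ x ht hσ _ hm
    simp only [Nat.cast_zero, zero_mul, add_zero] at hm ⊢
    exact ⟨by simpa using hm, by simp⟩
  | succ j ih =>
    intro t σ x ht hσ hle hm
    have hσj : 0 ≤ (j:ℝ) * σ := by positivity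
    have heq : t + σ + (j:ℝ) * σ = t + ((j+1 : ℕ) : ℝ) * σ := by push_cast; ring
    have hm' : sc.Mem (t + σ + (j:ℝ) * σ) x := by rw [heq]; exact hm
    have hle' : t + σ + (j:ℝ) * σ ≤ τ := by rw [heq]; exact hle
    obtain ⟨hm1, hn1⟩ := ih (t + σ) σ x (by linarith) hσ hle' hm'
    have hstep := hu t σ ht hσ (by linarith) ((u ^ j) x) hm1
    have happ : (u ^ (j+1)) x = u ((u ^ j) x) := by
      rw [pow_succ', Module.End.mul_apply]
    constructor
    · rw [happ]; exact hstep.1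
    · rw [happ]
      calc sc.norm t (u ((u ^ j) x)) ≤ C / σ ^ 1 * sc.norm (t + σ) ((u ^ j) x) := hstep.2
        _ ≤ C / σ * ((C / σ) ^ j * sc.norm (t + σ + (j:ℝ)*σ) x) := by
            rw [pow_one]
            exact mul_le_mul_of_nonneg_left hn1 (div_nonneg hC hσ.le)
        _ = (C / σ) ^ (j+1) * sc.norm (t + ((j+1 : ℕ) : ℝ) * σ) x := by
            rw [heq, pow_succ]; ring

private lemma mem_norm_sum {E : Type*} [AddCommGroup E] [Module ℝ E] {S : ℝ}
    (sc : BanachScale E S) (t : ℝ) (v : ℕ → E) (hv : ∀ j, sc.Mem t (v j)) (f : Finset ℕ) :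
    sc.Mem t (∑ j ∈ f, v j) ∧ sc.norm t (∑ j ∈ f, v j) ≤ ∑ j ∈ f, sc.norm t (v j) := by
  classical
  induction f using Finset.induction with
  | empty => simp [sc.mem_zero, sc.norm_zero]
  | @insert a f ha ih =>
    rw [Finset.sum_insert ha, Finset.sum_insert ha]
    exact ⟨sc.mem_add _ _ _ (hv a) ih.1,
      (sc.norm_add _ _ _).trans (by linarith [ih.2])⟩

private lemma norm_sub_comm' {E : Type*} [AddCommGroup E] [Module ℝ E] {S : ℝ}
    (sc : BanachScale E S) (t : ℝ) (a b : E) : sc.norm t (a - b) = sc.norm t (b - a) := by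
  have h : a - b = (-1 : ℝ) • (b - a) := by
    rw [neg_one_smul]; abel
  rw [h, sc.norm_smul]
  simp

/-- If `u` is a `1`-bounded `τ`-morphism with constant `C`, `3C < s ≤ τ` and
`λ ∈ (0, 1 − 3C/s)`, then for every `x ∈ E_s` the exponential series
`e^u x = Σ_j u^j x / j!` converges absolutely in `E_{λs}` and its sum `y` satisfies
`‖y‖_{λs} ≤ (1 − 3C/((1−λ)s))⁻¹ ‖x‖_s`. -/
theorem exp_converges {E : Type*} [AddCommGroup E] [Module ℝ E] {S : ℝ} (hS : 0 < S)
    (sc : BanachScale E S) (τ : ℝ) (hτ0 : 0 < τ) (hτS : τ ≤ S)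
    (u : Module.End ℝ E) (C : ℝ) (hC : 0 ≤ C)
    (hu : sc.IsBounded τ 1 C u)
    (s : ℝ) (hs0 : 0 < s) (hsτ : s ≤ τ) (h3C : 3 * C < s)
    (lam : ℝ) (hlam0 : 0 < lam) (hlam1 : lam < 1 - 3 * C / s) :
    ∀ x, sc.Mem s x →
      (∀ j : ℕ, sc.Mem (lam * s) (((j.factorial : ℝ))⁻¹ • (u ^ j) x)) ∧
      (Summable fun j : ℕ => sc.norm (lam * s) (((j.factorial : ℝ))⁻¹ • (u ^ j) x)) ∧
      ∃ y, sc.ConvergesTo (lam * s) (expPartial u x) y ∧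
        sc.norm (lam * s) y ≤ (1 - 3 * C / ((1 - lam) * s))⁻¹ * sc.norm s x := by
  intro x hx
  have hCs : 0 ≤ 3 * C / s := by positivity
  have hlam1' : lam < 1 := lt_of_lt_of_le hlam1 (by linarith)
  set t := lam * s with htdef
  have ht0 : 0 < t := mul_pos hlam0 hs0
  have hts : t ≤ s := by
    rw [htdef]; nlinarith
  have hsS : s ≤ S := hsτ.trans hτS
  have htS : t ≤ S := hts.trans hsS
  set d := (1 - lam) * s with hddef
  have hd0 : 0 < d := mul_pos (by linarith) hs0
  have hdC : 3 * C < d := by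
    rw [hddef]
    have h' : 3 * C / s < 1 - lam := by linarith
    calc 3 * C = (3 * C / s) * s := by field_simp
      _ < (1 - lam) * s := by exact mul_lt_mul_of_pos_right h' hs0
  set q := 3 * C / d with hqdef
  have hq0 : 0 ≤ q := div_nonneg (by linarith) hd0.le
  have hq1 : q < 1 := (div_lt_one hd0).mpr hdC
  set M := sc.norm s x with hMdef
  have hM0 : 0 ≤ M := sc.norm_nonneg s x
  -- key per-term estimate
  have key : ∀ j : ℕ, sc.Mem t ((u ^ j) x) ∧
      sc.norm t (((j.factorial : ℝ))⁻¹ • (u ^ j) x) ≤ q ^ j * M := by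
    intro j
    rcases Nat.eq_zero_or_pos j with h0 | hj
    · subst h0
      refine ⟨by simpa using sc.mem_mono t s x ht0 hts hx, ?_⟩
      have := sc.norm_mono t s x ht0 hts hsS hx
      simpa using this
    · have hjR : (0:ℝ) < (j:ℝ) := by exact_mod_cast hj
      set σ := d / j with hσdef
      have hσ0 : 0 < σ := div_pos hd0 hjR
      have heq : t + (j:ℝ) * σ = s := by
        rw [hσdef, htdef, hddef]
        field_simp
        ring
      obtain ⟨hmem, hn⟩ := iter_bound sc τ u C hC hu j t σ x ht0 hσ0
        (by rw [heq]; exact hsτ) (by rw [heq]; exact hx)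
      rw [heq] at hn
      refine ⟨hmem, ?_⟩
      rw [sc.norm_smul]
      have hfac : (0:ℝ) < j.factorial := by exact_mod_cast j.factorial_pos
      have hCσ : C / σ = (C / d) * j := by
        rw [hσdef]; field_simp
      have hn' : sc.norm t ((u ^ j) x) ≤ ((C/d)^j * (j:ℝ)^j) * M := by
        calc sc.norm t ((u ^ j) x) ≤ (C / σ) ^ j * M := hn
          _ = ((C/d)^j * (j:ℝ)^j) * M := by rw [hCσ, mul_pow]
      have hkey2 : ((j.factorial : ℝ))⁻¹ * ((C/d)^j * (j:ℝ)^j) ≤ 3^j * (C/d)^j := by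
        calc ((j.factorial : ℝ))⁻¹ * ((C/d)^j * (j:ℝ)^j)
            ≤ ((j.factorial : ℝ))⁻¹ * ((C/d)^j * (3^j * j.factorial)) := by
              refine mul_le_mul_of_nonneg_left ?_ (by positivity)
              exact mul_le_mul_of_nonneg_left (pow_self_le_aux j) (by positivity)
          _ = 3^j * (C/d)^j := by field_simp
      have habs : |((j.factorial : ℝ))⁻¹| = ((j.factorial : ℝ))⁻¹ :=
        abs_of_nonneg (by positivity)
      rw [habs]
      calc ((j.factorial : ℝ))⁻¹ * sc.norm t ((u ^ j) x)
          ≤ ((j.factorial : ℝ))⁻¹ * (((C/d)^j * (j:ℝ)^j) * M) :=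
            mul_le_mul_of_nonneg_left hn' (by positivity)
        _ = (((j.factorial : ℝ))⁻¹ * ((C/d)^j * (j:ℝ)^j)) * M := by ring
        _ ≤ (3^j * (C/d)^j) * M := mul_le_mul_of_nonneg_right hkey2 hM0
        _ = q ^ j * M := by
            rw [hqdef, ← mul_pow, mul_div_assoc]
  -- notation for the terms
  set v : ℕ → E := fun j => ((j.factorial : ℝ))⁻¹ • (u ^ j) x with hvdef
  have memv : ∀ j, sc.Mem t (v j) := fun j => sc.mem_smul _ _ _ (key j).1
  have hTle : ∀ j, sc.norm t (v j) ≤ q ^ j * M := fun j => (key j).2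
  have hgeo : Summable (fun j : ℕ => q ^ j * M) :=
    (summable_geometric_of_lt_one hq0 hq1).mul_right M
  have hsum : Summable (fun j : ℕ => sc.norm t (v j)) :=
    Summable.of_nonneg_of_le (fun j => sc.norm_nonneg _ _) hTle hgeo
  have hexp : ∀ N, expPartial u x N = ∑ j ∈ Finset.range N, v j := fun N => rfl
  have memP : ∀ N, sc.Mem t (expPartial u x N) := by
    intro N; rw [hexp]
    exact (mem_norm_sum sc t v memv _).1
  have htsum : (∑' j : ℕ, sc.norm t (v j)) ≤ (1 - q)⁻¹ * M := by
    calc (∑' j : ℕ, sc.norm t (v j)) ≤ ∑' j : ℕ, q ^ j * M :=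
          Summable.tsum_le_tsum hTle hsum hgeo
      _ = (∑' j : ℕ, q ^ j) * M := tsum_mul_right
      _ = (1 - q)⁻¹ * M := by rw [tsum_geometric_of_lt_one hq0 hq1]
  have hB : ∀ N, sc.norm t (expPartial u x N) ≤ (1 - q)⁻¹ * M := by
    intro N
    rw [hexp]
    refine ((mem_norm_sum sc t v memv _).2).trans ?_
    refine (Summable.sum_le_tsum _ (fun j _ => sc.norm_nonneg _ _) hsum).trans htsum
  -- Cauchy criterion
  have hstep : ∀ n m : ℕ, n ≤ m →
      sc.norm t (expPartial u x m - expPartial u x n) ≤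
        dist (∑ j ∈ Finset.range m, sc.norm t (v j)) (∑ j ∈ Finset.range n, sc.norm t (v j)) := by
    intro n m hnm
    have hdiff : expPartial u x m - expPartial u x n = ∑ j ∈ Finset.Ico n m, v j := by
      rw [hexp, hexp, eq_comm]
      exact Finset.sum_Ico_eq_sub _ hnm
    rw [hdiff]
    refine ((mem_norm_sum sc t v memv _).2).trans ?_
    have hIco : ∑ j ∈ Finset.Ico n m, sc.norm t (v j) =
        ∑ j ∈ Finset.range m, sc.norm t (v j) - ∑ j ∈ Finset.range n, sc.norm t (v j) :=
      Finset.sum_Ico_eq_sub _ hnm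
    rw [hIco, Real.dist_eq]
    exact le_abs_self _
  have hcauchy : ∀ ε : ℝ, 0 < ε → ∃ N, ∀ m ≥ N, ∀ n ≥ N,
      sc.norm t (expPartial u x m - expPartial u x n) ≤ ε := by
    intro ε hε
    have hps : CauchySeq (fun N => ∑ j ∈ Finset.range N, sc.norm t (v j)) :=
      hsum.hasSum.tendsto_sum_nat.cauchySeq
    obtain ⟨N, hN⟩ := Metric.cauchySeq_iff.mp hps ε hε
    refine ⟨N, fun m hm n hn => ?_⟩
    rcases le_total n m with h | h
    · exact (hstep n m h).trans (hN m hm n hn).le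
    · rw [norm_sub_comm' sc t]
      exact (hstep m n h).trans (hN n hn m hm).le
  obtain ⟨y, hy1, hy2⟩ := sc.complete t ht0 htS (expPartial u x) memP hcauchy
  have hfin : sc.norm t y ≤ (1 - q)⁻¹ * M := by
    have h1 : ∀ n, sc.norm t y ≤ sc.norm t (expPartial u x n - y) + (1 - q)⁻¹ * M := by
      intro n
      have hy : y = (y - expPartial u x n) + expPartial u x n := by abel
      calc sc.norm t y = sc.norm t ((y - expPartial u x n) + expPartial u x n) := by rw [← hy]
        _ ≤ sc.norm t (y - expPartial u x n) + sc.norm t (expPartial u x n) :=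
            sc.norm_add _ _ _
        _ = sc.norm t (expPartial u x n - y) + sc.norm t (expPartial u x n) := by
            rw [norm_sub_comm' sc t]
        _ ≤ sc.norm t (expPartial u x n - y) + (1 - q)⁻¹ * M := by
            linarith [hB n]
    have h2 : Tendsto (fun n => sc.norm t (expPartial u x n - y) + (1 - q)⁻¹ * M)
        atTop (nhds ((1 - q)⁻¹ * M)) := by
      have := hy2.add_const ((1 - q)⁻¹ * M)
      rwa [zero_add] at this
    exact ge_of_tendsto h2 (Filter.Eventually.of_forall h1)
  exact ⟨memv, hsum, y, ⟨memP, hy1, hy2⟩, hfin⟩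
end

section
/- Let n ≥ 1, s > 0, and let D_s := {z ∈ ℂ^n : max_j |z_j| ≤ s} be the closed polydisc of radius s. Let f be continuous on D_s and holomorphic on its interior, with Taylor expansion f(z) = Σ_{i ∈ ℕ^n} f_i z^i at the origin (z^i := z_1^{i_1} ⋯ z_n^{i_n}). Let S ⊆ ℕ^n \ {0} be a finite set, α ∈ ℝ^n and a > 0 such that |⟨α,i⟩| ≥ a for every i ∈ S (where i is viewed as a vector of ℝ^n). Then the polynomial g(z) := Σ_{i ∈ S} (f_i / ⟨α,i⟩) z^i satisfies ∫_{D_s} |g(z)|² dV(z) ≤ a^{-2} ∫_{D_s} |f(z)|² dV(z), where dV is the Lebesgue measure on ℂ^n ≅ ℝ^{2n}. -/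
open MeasureTheory

section HadamardAux

open MeasureTheory Complex Set Real

lemma angular_int (m : ℤ) :
    ∫ θ in Set.Ioo (-π) π, Complex.exp (m * θ * Complex.I) =
      if m = 0 then ((2 * π : ℝ) : ℂ) else 0 := by
  rw [← MeasureTheory.integral_Ioc_eq_integral_Ioo,
    ← intervalIntegral.integral_of_le (by linarith [Real.pi_pos] : -π ≤ π)]
  by_cases hm : m = 0
  · simp [hm, two_mul]
  · simp only [hm, if_false]
    have hc : (m : ℂ) * Complex.I ≠ 0 := by
      simp [Complex.I_ne_zero, Int.cast_ne_zero, hm]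
    have : ∀ θ : ℝ, (m : ℂ) * θ * Complex.I = (m * Complex.I) * θ := by intro θ; ring
    simp_rw [this]
    rw [integral_exp_mul_complex hc]
    have h1 : Complex.exp ((m * Complex.I) * π) = Complex.exp ((m * Complex.I) * (-π)) := by
      rw [Complex.exp_eq_exp_iff_exists_int]
      exact ⟨m, by push_cast; ring⟩
    rw [h1]; push_cast; rw [sub_self, zero_div]

open intervalIntegral in
lemma disc_monomial (r : ℝ) (hr : 0 < r) (p q : ℕ) :
    ∫ w in Metric.closedBall (0:ℂ) r, w ^ p * (starRingEnd ℂ w) ^ q =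
      if p = q then ((π * r ^ (2 * p + 2) / (p + 1) : ℝ) : ℂ) else 0 := by
  set F : ℂ → ℂ := fun w => w ^ p * (starRingEnd ℂ w) ^ q with hF
  have hmeas : MeasurableSet (Metric.closedBall (0:ℂ) r) := measurableSet_closedBall
  rw [← MeasureTheory.integral_indicator hmeas]
  rw [← Complex.integral_comp_polarCoord_symm]
  set S : Set (ℝ × ℝ) := Set.Ioc 0 r ×ˢ Set.Ioo (-π) π with hS
  have hsub : S ⊆ polarCoord.target := by
    rw [polarCoord_target]
    exact Set.prod_mono Set.Ioc_subset_Ioi_self le_rfl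
  set G : ℝ × ℝ → ℂ := fun pt =>
    (pt.1 : ℂ) ^ (p + q + 1) * Complex.exp (((p : ℤ) - q : ℤ) * pt.2 * Complex.I) with hG
  have key : ∀ pt ∈ polarCoord.target,
      pt.1 • (Metric.closedBall (0:ℂ) r).indicator F (Complex.polarCoord.symm pt) =
      S.indicator G pt := by
    rintro ⟨ρ, θ⟩ hpt
    rw [polarCoord_target] at hpt
    obtain ⟨hρ, hθ⟩ := hpt
    simp only [Set.mem_Ioi] at hρ
    have habs : ‖Complex.polarCoord.symm (ρ, θ)‖ = ρ := by
      rw [Complex.norm_polarCoord_symm]; exact abs_of_pos hρ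
    have hmem : Complex.polarCoord.symm (ρ, θ) ∈ Metric.closedBall (0:ℂ) r ↔ ρ ≤ r := by
      rw [Metric.mem_closedBall, dist_zero_right, habs]
    have hmemS : ((ρ, θ) : ℝ × ℝ) ∈ S ↔ ρ ≤ r := by
      simp [hS, Set.mem_prod, hρ, hθ]
    by_cases hle : ρ ≤ r
    · rw [Set.indicator_of_mem (hmem.mpr hle), Set.indicator_of_mem (hmemS.mpr hle)]
      have hsymm : Complex.polarCoord.symm (ρ, θ) = ↑ρ * Complex.exp (↑θ * Complex.I) := by
        rw [Complex.polarCoord_symm_apply, Complex.exp_mul_I, Complex.ofReal_cos,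
          Complex.ofReal_sin]
      have hconj : (starRingEnd ℂ) (↑ρ * Complex.exp (↑θ * Complex.I)) =
          ↑ρ * Complex.exp (-(↑θ * Complex.I)) := by
        rw [map_mul, Complex.conj_ofReal, ← Complex.exp_conj]
        congr 1
        rw [map_mul, Complex.conj_ofReal, Complex.conj_I]
        ring
      have hexp : Complex.exp (↑θ * Complex.I) ^ p * Complex.exp (-(↑θ * Complex.I)) ^ q =
          Complex.exp (((p : ℤ) - q : ℤ) * θ * Complex.I) := by
        rw [← Complex.exp_nat_mul, ← Complex.exp_nat_mul, ← Complex.exp_add]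
        congr 1
        push_cast
        ring
      simp only [hF, hG, hsymm, hconj, Complex.real_smul, mul_pow]
      rw [← hexp]
      ring
    · rw [Set.indicator_of_notMem (fun h => hle (hmem.mp h)),
        Set.indicator_of_notMem (fun h => hle (hmemS.mp h)), smul_zero]
  rw [setIntegral_congr_fun polarCoord.open_target.measurableSet key]
  have hSmeas : MeasurableSet S := measurableSet_Ioc.prod measurableSet_Ioo
  rw [MeasureTheory.setIntegral_indicator hSmeas, Set.inter_eq_self_of_subset_right hsub, hS, hG]
  rw [Measure.volume_eq_prod,
    setIntegral_prod_mul (fun x : ℝ => ((x : ℂ)) ^ (p + q + 1))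
      (fun y : ℝ => Complex.exp ((((p : ℤ) - q : ℤ) : ℂ) * (y : ℂ) * Complex.I))]
  have hrad : ∫ ρ in Set.Ioc (0:ℝ) r, ((ρ : ℂ)) ^ (p + q + 1) =
      ((r ^ (p + q + 2) / (p + q + 2) : ℝ) : ℂ) := by
    simp_rw [← Complex.ofReal_pow]
    have h0 := _root_.integral_ofReal (𝕜 := ℂ) (f := fun ρ : ℝ => ρ ^ (p+q+1))
      (μ := volume.restrict (Set.Ioc 0 r))
    have h1 : ∫ x in Set.Ioc (0:ℝ) r, x ^ (p+q+1) = r ^ (p+q+2) / (p+q+2) := by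
      rw [← integral_of_le hr.le, integral_pow]
      norm_num
      ring_nf
    rw [h1] at h0
    refine h0.trans ?_
    norm_num
  rw [hrad, angular_int ((p : ℤ) - q)]
  by_cases hpq : p = q
  · subst hpq
    rw [if_pos (sub_self _), if_pos rfl]
    push_cast
    have h1 : (p : ℂ) + p + 2 ≠ 0 := by
      have : (0:ℝ) < (p:ℝ) + p + 2 := by positivity
      intro h
      have := congrArg Complex.re h
      push_cast at this
      simp at this
      linarith
    have h2 : (p : ℂ) + 1 ≠ 0 := by
      intro h
      have := congrArg Complex.re h
      push_cast at this
      simp at this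
      linarith [Nat.cast_nonneg (α := ℝ) p]
    rw [div_mul_eq_mul_div, div_eq_div_iff h1 h2]
    ring
  · have hm : ((p:ℤ) - q) ≠ 0 := sub_ne_zero.mpr (by exact_mod_cast hpq)
    rw [if_neg hm, if_neg hpq, mul_zero]

noncomputable def Cc {n : ℕ} (r : ℝ) (i : Fin n → ℕ) : ℝ :=
  ∏ j, π * r ^ (2 * i j + 2) / (i j + 1)

lemma Cc_pos {n : ℕ} {r : ℝ} (hr : 0 < r) (i : Fin n → ℕ) : 0 < Cc r i := by
  refine Finset.prod_pos fun j _ => ?_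
  have : (0:ℝ) < i j + 1 := by positivity
  positivity

lemma Dset_eq {n : ℕ} (r : ℝ) :
    {z : Fin n → ℂ | ∀ j, ‖z j‖ ≤ r} =
      Set.pi Set.univ (fun _ : Fin n => Metric.closedBall (0:ℂ) r) := by
  ext z
  simp [Set.mem_pi, Metric.mem_closedBall, dist_zero_right]

lemma Dset_measurable {n : ℕ} (r : ℝ) :
    MeasurableSet {z : Fin n → ℂ | ∀ j, ‖z j‖ ≤ r} := by
  rw [Dset_eq]
  exact MeasurableSet.univ_pi fun j => measurableSet_closedBall

lemma Dset_compact {n : ℕ} (r : ℝ) :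
    IsCompact {z : Fin n → ℂ | ∀ j, ‖z j‖ ≤ r} := by
  rw [Dset_eq]
  exact isCompact_univ_pi fun j => isCompact_closedBall _ _

lemma poly_orth {n : ℕ} (r : ℝ) (hr : 0 < r) (i k : Fin n → ℕ) :
    ∫ z in {z : Fin n → ℂ | ∀ j, ‖z j‖ ≤ r},
        (∏ j, z j ^ i j) * (starRingEnd ℂ) (∏ j, z j ^ k j) =
      if i = k then ((Cc r i : ℝ) : ℂ) else 0 := by
  have hint : ∀ z : Fin n → ℂ,
      (∏ j, z j ^ i j) * (starRingEnd ℂ) (∏ j, z j ^ k j) =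
      ∏ j, (z j ^ i j * (starRingEnd ℂ) (z j) ^ k j) := by
    intro z
    rw [map_prod]
    rw [← Finset.prod_mul_distrib]
    simp [map_pow]
  simp_rw [hint]
  rw [Dset_eq, ← MeasureTheory.integral_indicator (MeasurableSet.univ_pi
    fun _ => measurableSet_closedBall)]
  have hind : (Set.pi Set.univ (fun _ : Fin n => Metric.closedBall (0:ℂ) r)).indicator
      (fun z => ∏ j, (z j ^ i j * (starRingEnd ℂ) (z j) ^ k j)) =
      fun z => ∏ j, (Metric.closedBall (0:ℂ) r).indicator
        (fun w => w ^ i j * (starRingEnd ℂ) w ^ k j) (z j) := by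
    funext z
    by_cases hz : z ∈ Set.pi Set.univ (fun _ : Fin n => Metric.closedBall (0:ℂ) r)
    · rw [Set.indicator_of_mem hz]
      refine Finset.prod_congr rfl fun j _ => ?_
      rw [Set.indicator_of_mem (hz j (Set.mem_univ j))]
    · rw [Set.indicator_of_notMem hz]
      have : ∃ j, z j ∉ Metric.closedBall (0:ℂ) r := by
        by_contra hc
        push_neg at hc
        exact hz fun j _ => hc j
      obtain ⟨j, hj⟩ := this
      exact (Finset.prod_eq_zero (Finset.mem_univ j)
        (Set.indicator_of_notMem hj _)).symm
  rw [hind]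
  rw [MeasureTheory.integral_fintype_prod_volume_eq_prod (ι := Fin n)
    (f := fun j w => (Metric.closedBall (0:ℂ) r).indicator
      (fun w => w ^ i j * (starRingEnd ℂ) w ^ k j) w)]
  have hfac : ∀ j, ∫ w : ℂ, (Metric.closedBall (0:ℂ) r).indicator
      (fun w => w ^ i j * (starRingEnd ℂ) w ^ k j) w =
      if i j = k j then ((π * r ^ (2 * i j + 2) / (i j + 1) : ℝ) : ℂ) else 0 := by
    intro j
    rw [MeasureTheory.integral_indicator measurableSet_closedBall]
    exact disc_monomial r hr (i j) (k j)
  simp_rw [hfac]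
  by_cases h : i = k
  · subst h
    simp only [if_pos rfl, Cc]
    rw [Complex.ofReal_prod]
    simp
  · rw [if_neg h]
    obtain ⟨j, hj⟩ := Function.ne_iff.mp h
    exact Finset.prod_eq_zero (Finset.mem_univ j) (if_neg hj)

lemma mon_cont {n : ℕ} (i : Fin n → ℕ) : Continuous fun z : Fin n → ℂ => ∏ j, z j ^ i j :=
  continuous_finset_prod _ fun j _ => (continuous_apply j).pow _

lemma poly_cont {n : ℕ} (T : Finset (Fin n → ℕ)) (b : (Fin n → ℕ) → ℂ) :
    Continuous fun z : Fin n → ℂ => ∑ i ∈ T, b i * ∏ j, z j ^ i j :=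
  continuous_finset_sum _ fun i _ => continuous_const.mul (mon_cont i)

lemma poly_L2 {n : ℕ} (r : ℝ) (hr : 0 < r) (T : Finset (Fin n → ℕ)) (b : (Fin n → ℕ) → ℂ) :
    ∫ z in {z : Fin n → ℂ | ∀ j, ‖z j‖ ≤ r},
        ‖∑ i ∈ T, b i * ∏ j, z j ^ i j‖ ^ 2 = ∑ i ∈ T, ‖b i‖ ^ 2 * Cc r i := by
  set D := {z : Fin n → ℂ | ∀ j, ‖z j‖ ≤ r} with hD
  set P : (Fin n → ℂ) → ℂ := fun z => ∑ i ∈ T, b i * ∏ j, z j ^ i j with hP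
  have hPcont : Continuous P := poly_cont T b
  have hPP : ∫ z in D, P z * (starRingEnd ℂ) (P z) =
      ((∑ i ∈ T, ‖b i‖ ^ 2 * Cc r i : ℝ) : ℂ) := by
    have hexp : ∀ z, P z * (starRingEnd ℂ) (P z) =
        ∑ i ∈ T, ∑ k ∈ T, (b i * (starRingEnd ℂ) (b k)) *
          ((∏ j, z j ^ i j) * (starRingEnd ℂ) (∏ j, z j ^ k j)) := by
      intro z
      rw [hP]
      simp only [map_sum, Finset.sum_mul_sum, map_mul]
      exact Finset.sum_congr rfl fun i _ => Finset.sum_congr rfl fun k _ => by ring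
    simp_rw [hexp]
    rw [MeasureTheory.integral_finset_sum T (fun i _ => ?_)]
    swap
    · refine (Continuous.continuousOn ?_).integrableOn_compact (Dset_compact r)
      exact continuous_finset_sum _ fun k _ => continuous_const.mul
        ((mon_cont i).mul (Complex.continuous_conj.comp (mon_cont k)))
    have hInner : ∀ i ∈ T, (∫ z in D, ∑ k ∈ T, (b i * (starRingEnd ℂ) (b k)) *
        ((∏ j, z j ^ i j) * (starRingEnd ℂ) (∏ j, z j ^ k j))) =
        b i * (starRingEnd ℂ) (b i) * ((Cc r i : ℝ) : ℂ) := by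
      intro i hi
      rw [MeasureTheory.integral_finset_sum T (fun k _ => ?_)]
      swap
      · exact (Continuous.continuousOn (continuous_const.mul
          ((mon_cont i).mul (Complex.continuous_conj.comp (mon_cont k))))).integrableOn_compact
          (Dset_compact r)
      have : ∀ k ∈ T, (∫ z in D, (b i * (starRingEnd ℂ) (b k)) *
          ((∏ j, z j ^ i j) * (starRingEnd ℂ) (∏ j, z j ^ k j))) =
          if i = k then b i * (starRingEnd ℂ) (b k) * ((Cc r i : ℝ) : ℂ) else 0 := by
        intro k _
        rw [MeasureTheory.integral_const_mul, hD, poly_orth r hr i k]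
        by_cases h : i = k
        · rw [if_pos h, if_pos h, mul_assoc]
        · rw [if_neg h, if_neg h, mul_zero]
      rw [Finset.sum_congr rfl this, Finset.sum_ite_eq, if_pos hi]
    rw [Finset.sum_congr rfl hInner]
    have hterm : ∀ i ∈ T, b i * (starRingEnd ℂ) (b i) * ((Cc r i : ℝ) : ℂ) =
        ((‖b i‖ ^ 2 * Cc r i : ℝ) : ℂ) := by
      intro i _
      rw [Complex.mul_conj, Complex.normSq_eq_norm_sq]
      push_cast
      ring
    rw [Finset.sum_congr rfl hterm, ← Complex.ofReal_sum]
  have h2 : ∀ z : Fin n → ℂ, (‖P z‖ : ℝ) ^ 2 = (P z * (starRingEnd ℂ) (P z)).re := by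
    intro z
    rw [Complex.mul_conj, Complex.normSq_eq_norm_sq]
    norm_cast
  have h2' : ∀ z : Fin n → ℂ, ‖∑ i ∈ T, b i * ∏ j, z j ^ i j‖ ^ 2 =
      (P z * (starRingEnd ℂ) (P z)).re := h2
  simp_rw [h2']
  have hInt : IntegrableOn (fun z => P z * (starRingEnd ℂ) (P z)) D :=
    (Continuous.continuousOn (hPcont.mul
      (Complex.continuous_conj.comp hPcont))).integrableOn_compact (Dset_compact r)
  have hre := Complex.reCLM.integral_comp_comm hInt
  simp only [Complex.reCLM_apply] at hre
  rw [hre, hPP, Complex.ofReal_re]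

lemma summable_pow_pi {n : ℕ} {t : ℝ} (h0 : 0 ≤ t) (h1 : t < 1) :
    Summable (fun i : Fin n → ℕ => ∏ j, t ^ i j) := by
  induction n with
  | zero => exact Summable.of_finite
  | succ m ih =>
    have hgeo : Summable (fun k : ℕ => t ^ k) := summable_geometric_of_lt_one h0 h1
    have hmul := hgeo.mul_of_nonneg ih (fun k => pow_nonneg h0 k)
      (fun i => Finset.prod_nonneg fun j _ => pow_nonneg h0 _)
    refine (Equiv.summable_iff (Fin.consEquiv (fun _ : Fin (m+1) => ℕ))).mp (hmul.congr ?_)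
    rintro ⟨x, v⟩
    simp [Fin.consEquiv, Fin.prod_univ_succ]

lemma f_orth {n : ℕ} {s : ℝ} (r : ℝ) (hr : 0 < r) (hrs : r < s)
    (f : (Fin n → ℂ) → ℂ) (c : (Fin n → ℕ) → ℂ)
    (hTaylor : ∀ z : Fin n → ℂ, (∀ j, ‖z j‖ < s) →
      HasSum (fun i : Fin n → ℕ => c i * ∏ j, z j ^ i j) (f z))
    (k : Fin n → ℕ) :
    ∫ z in {z : Fin n → ℂ | ∀ j, ‖z j‖ ≤ r},
        f z * (starRingEnd ℂ) (∏ j, z j ^ k j) =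
      c k * ((Cc r k : ℝ) : ℂ) := by
  set D := {z : Fin n → ℂ | ∀ j, ‖z j‖ ≤ r} with hD
  set ρ : ℝ := (r + s) / 2 with hρ
  have hρ0 : 0 < ρ := by rw [hρ]; linarith
  have hrρ : r < ρ := by rw [hρ]; linarith
  have hρs : ρ < s := by rw [hρ]; linarith
  -- summability of the coefficients at radius ρ
  have hsum0 : Summable (fun i : Fin n → ℕ => c i * ∏ j, ((ρ:ℂ)) ^ i j) := by
    refine (hTaylor (fun _ => (ρ:ℂ)) fun j => ?_).summable
    rw [Complex.norm_real, Real.norm_eq_abs, abs_of_pos hρ0]; exact hρs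
  have hnorm : Summable (fun i : Fin n → ℕ => ‖c i * ∏ j, ((ρ:ℂ)) ^ i j‖) :=
    summable_norm_iff.mpr hsum0
  set M : ℝ := ∑' i : Fin n → ℕ, ‖c i * ∏ j, ((ρ:ℂ)) ^ i j‖ with hM
  have hMb : ∀ i : Fin n → ℕ, ‖c i‖ * ∏ j, ρ ^ i j ≤ M := by
    intro i
    have h1 : ‖c i * ∏ j, ((ρ:ℂ)) ^ i j‖ = ‖c i‖ * ∏ j, ρ ^ i j := by
      rw [norm_mul, norm_prod]
      congr 1
      refine Finset.prod_congr rfl fun j _ => ?_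
      rw [norm_pow, Complex.norm_real, Real.norm_of_nonneg hρ0.le]
    rw [← h1]
    exact Summable.le_tsum hnorm i fun _ _ => norm_nonneg _
  set t : ℝ := r / ρ with ht
  have h0t : 0 ≤ t := div_nonneg hr.le hρ0.le
  have ht1 : t < 1 := (div_lt_one hρ0).mpr hrρ
  set K : ℝ := ∏ j, r ^ k j with hK
  have hK0 : 0 ≤ K := Finset.prod_nonneg fun j _ => pow_nonneg hr.le _
  set u : (Fin n → ℕ) → ℝ := fun i => (M * K) * ∏ j, t ^ i j with hu_def
  have hM0 : 0 ≤ M := tsum_nonneg fun _ => norm_nonneg _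
  have hu_nonneg : ∀ i, 0 ≤ u i := fun i => mul_nonneg (mul_nonneg hM0 hK0)
    (Finset.prod_nonneg fun j _ => pow_nonneg h0t _)
  have hu : Summable u := (summable_pow_pi h0t ht1).mul_left _
  set F : (Fin n → ℕ) → (Fin n → ℂ) → ℂ :=
    fun i z => c i * (∏ j, z j ^ i j) * (starRingEnd ℂ) (∏ j, z j ^ k j) with hF
  have hFcont : ∀ i, Continuous (F i) := fun i =>
    (continuous_const.mul (mon_cont i)).mul (Complex.continuous_conj.comp (mon_cont k))
  have hbound : ∀ i, ∀ z ∈ D, ‖F i z‖ ≤ u i := by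
    intro i z hz
    have hz' : ∀ j, ‖z j‖ ≤ r := hz
    have h1 : ‖F i z‖ = ‖c i‖ * (∏ j, ‖z j‖ ^ i j) *
        (∏ j, ‖z j‖ ^ k j) := by
      rw [hF]
      simp only [norm_mul, norm_prod, norm_pow, RCLike.norm_conj]
    rw [h1]
    have hmon : ∀ (m : Fin n → ℕ), (∏ j, ‖z j‖ ^ m j) ≤ ∏ j, r ^ m j := by
      intro m
      refine Finset.prod_le_prod (fun j _ => by positivity)
        (fun j _ => pow_le_pow_left₀ (norm_nonneg _) (hz' j) _)
    have h2 : ‖c i‖ * (∏ j, ‖z j‖ ^ i j) * (∏ j, ‖z j‖ ^ k j) ≤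
        ‖c i‖ * (∏ j, r ^ i j) * K := by
      refine mul_le_mul (mul_le_mul_of_nonneg_left (hmon i) (norm_nonneg _)) (hmon k)
        (Finset.prod_nonneg fun j _ => by positivity) ?_
      have := hmon i
      positivity
    refine h2.trans ?_
    have h3 : (∏ j, r ^ i j) = (∏ j, ρ ^ i j) * ∏ j, t ^ i j := by
      rw [← Finset.prod_mul_distrib]
      refine Finset.prod_congr rfl fun j _ => ?_
      rw [← mul_pow, ht, mul_div_cancel₀ _ hρ0.ne']
    rw [h3, hu_def]
    have h4 : ‖c i‖ * ((∏ j, ρ ^ i j) * ∏ j, t ^ i j) * K ≤ M * (∏ j, t ^ i j) * K := by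
      have h5 : ‖c i‖ * (∏ j, ρ ^ i j) ≤ M := hMb i
      have h6 : 0 ≤ ∏ j, t ^ i j := Finset.prod_nonneg fun j _ => pow_nonneg h0t _
      nlinarith [mul_le_mul_of_nonneg_right (mul_le_mul_of_nonneg_right h5 h6) hK0]
    calc ‖c i‖ * ((∏ j, ρ ^ i j) * ∏ j, t ^ i j) * K ≤ M * (∏ j, t ^ i j) * K := h4
      _ = M * K * ∏ j, t ^ i j := by ring
  -- pointwise expansion
  have hpt : Set.EqOn (fun z => f z * (starRingEnd ℂ) (∏ j, z j ^ k j))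
      (fun z => ∑' i, F i z) D := by
    intro z hz
    have hz' : ∀ j, ‖z j‖ < s := fun j => lt_of_le_of_lt (hz j) hrs
    have := (hTaylor z hz').tsum_eq
    simp only
    rw [← this, ← tsum_mul_right]
  rw [MeasureTheory.setIntegral_congr_fun (Dset_measurable r) hpt]
  have hvol : volume D ≠ ⊤ := (Dset_compact r).measure_lt_top.ne
  have hlint : ∀ i, ∫⁻ z, ‖F i z‖₊ ∂(volume.restrict D) ≤ ENNReal.ofReal (u i) * volume D := by
    intro i
    calc ∫⁻ z, ‖F i z‖₊ ∂(volume.restrict D)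
        ≤ ∫⁻ _, ENNReal.ofReal (u i) ∂(volume.restrict D) := by
          refine lintegral_mono_ae ?_
          rw [ae_restrict_iff' (Dset_measurable r)]
          filter_upwards with z hz
          rw [← enorm_eq_nnnorm, ← ofReal_norm]
          exact ENNReal.ofReal_le_ofReal (hbound i z hz)
      _ = ENNReal.ofReal (u i) * volume D := by
          rw [MeasureTheory.lintegral_const, Measure.restrict_apply MeasurableSet.univ,
            Set.univ_inter]
  have hsum_lint : ∑' i, ∫⁻ z, ‖F i z‖₊ ∂(volume.restrict D) ≠ ⊤ := by
    refine ne_top_of_le_ne_top ?_ (ENNReal.tsum_le_tsum hlint)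
    rw [ENNReal.tsum_mul_right, ← ENNReal.ofReal_tsum_of_nonneg hu_nonneg hu]
    exact ENNReal.mul_ne_top ENNReal.ofReal_ne_top hvol
  rw [MeasureTheory.integral_tsum (fun i => (hFcont i).aestronglyMeasurable) hsum_lint]
  have hterm : ∀ i, ∫ z in D, F i z = if i = k then c k * ((Cc r k : ℝ) : ℂ) else 0 := by
    intro i
    have : ∀ z, F i z = c i * ((∏ j, z j ^ i j) * (starRingEnd ℂ) (∏ j, z j ^ k j)) := by
      intro z; rw [hF]; ring
    simp_rw [this]
    rw [MeasureTheory.integral_const_mul, hD, poly_orth r hr i k]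
    by_cases h : i = k
    · subst h; rw [if_pos rfl, if_pos rfl]
    · rw [if_neg h, if_neg h, mul_zero]
  rw [tsum_congr hterm, tsum_ite_eq]

lemma norm_sub_sq_complex (a b : ℂ) :
    ‖a - b‖ ^ 2 = ‖a‖ ^ 2 - 2 * (a * (starRingEnd ℂ) b).re + ‖b‖ ^ 2 := by
  simp only [Complex.sq_norm, Complex.normSq_apply, Complex.mul_re,
    Complex.conj_re, Complex.conj_im, Complex.sub_re, Complex.sub_im]
  ring

lemma bessel {n : ℕ} {s : ℝ} (r : ℝ) (hr : 0 < r) (hrs : r < s)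
    (f : (Fin n → ℂ) → ℂ) (c : (Fin n → ℕ) → ℂ)
    (hcont : ContinuousOn f {z : Fin n → ℂ | ∀ j, ‖z j‖ ≤ s})
    (hTaylor : ∀ z : Fin n → ℂ, (∀ j, ‖z j‖ < s) →
      HasSum (fun i : Fin n → ℕ => c i * ∏ j, z j ^ i j) (f z))
    (T : Finset (Fin n → ℕ)) :
    ∑ i ∈ T, ‖c i‖ ^ 2 * Cc r i ≤
      ∫ z in {z : Fin n → ℂ | ∀ j, ‖z j‖ ≤ r}, ‖f z‖ ^ 2 := by
  set Dr := {z : Fin n → ℂ | ∀ j, ‖z j‖ ≤ r} with hDr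
  have hsub : Dr ⊆ {z : Fin n → ℂ | ∀ j, ‖z j‖ ≤ s} :=
    fun z hz j => (hz j).trans hrs.le
  have hfc : ContinuousOn f Dr := hcont.mono hsub
  set P : (Fin n → ℂ) → ℂ := fun z => ∑ i ∈ T, c i * ∏ j, z j ^ i j with hP
  have hPc : Continuous P := poly_cont T c
  have hfPc : ContinuousOn (fun z => f z * (starRingEnd ℂ) (P z)) Dr :=
    hfc.mul (Complex.continuous_conj.comp hPc).continuousOn
  have hfP : IntegrableOn (fun z => f z * (starRingEnd ℂ) (P z)) Dr :=
    hfPc.integrableOn_compact (Dset_compact r)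
  have hf2 : IntegrableOn (fun z => ‖f z‖ ^ 2) Dr :=
    (hfc.norm.pow 2).integrableOn_compact (Dset_compact r)
  have hP2 : IntegrableOn (fun z => ‖P z‖ ^ 2) Dr :=
    ((hPc.norm.pow 2).continuousOn).integrableOn_compact (Dset_compact r)
  have hfPre : IntegrableOn (fun z => (f z * (starRingEnd ℂ) (P z)).re) Dr := hfP.re
  have hB : ∫ z in Dr, f z * (starRingEnd ℂ) (P z) =
      ((∑ i ∈ T, ‖c i‖ ^ 2 * Cc r i : ℝ) : ℂ) := by
    have hexp : ∀ z, f z * (starRingEnd ℂ) (P z) =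
        ∑ i ∈ T, (starRingEnd ℂ) (c i) * (f z * (starRingEnd ℂ) (∏ j, z j ^ i j)) := by
      intro z
      rw [hP]
      simp only [map_sum, map_mul, Finset.mul_sum]
      exact Finset.sum_congr rfl fun i _ => by ring
    simp_rw [hexp]
    rw [MeasureTheory.integral_finset_sum T (fun i _ => ?_)]
    swap
    · exact ((hfc.mul (Complex.continuous_conj.comp (mon_cont i)).continuousOn).integrableOn_compact
        (Dset_compact r)).const_mul _
    have hterm : ∀ i ∈ T, (∫ z in Dr, (starRingEnd ℂ) (c i) *
        (f z * (starRingEnd ℂ) (∏ j, z j ^ i j))) = ((‖c i‖ ^ 2 * Cc r i : ℝ) : ℂ) := by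
      intro i _
      rw [MeasureTheory.integral_const_mul, hDr, f_orth r hr hrs f c hTaylor i, ← mul_assoc]
      rw [show (starRingEnd ℂ) (c i) * c i = ((‖c i‖ ^ 2 : ℝ) : ℂ) from by
        rw [mul_comm, Complex.mul_conj, Complex.normSq_eq_norm_sq]]
      rw [← Complex.ofReal_mul]
    rw [Finset.sum_congr rfl hterm, ← Complex.ofReal_sum]
  have hBre : ∫ z in Dr, (f z * (starRingEnd ℂ) (P z)).re =
      ∑ i ∈ T, ‖c i‖ ^ 2 * Cc r i := by
    have h := Complex.reCLM.integral_comp_comm hfP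
    simp only [Complex.reCLM_apply] at h
    rw [h, hB, Complex.ofReal_re]
  have hptw : ∀ z : Fin n → ℂ, ‖f z - P z‖ ^ 2 =
      ‖f z‖ ^ 2 - 2 * (f z * (starRingEnd ℂ) (P z)).re + ‖P z‖ ^ 2 :=
    fun z => norm_sub_sq_complex (f z) (P z)
  have hpos : (0:ℝ) ≤ ∫ z in Dr, ‖f z - P z‖ ^ 2 :=
    MeasureTheory.integral_nonneg fun z => sq_nonneg _
  have hsplit : ∫ z in Dr, ‖f z - P z‖ ^ 2 =
      (∫ z in Dr, ‖f z‖ ^ 2) - 2 * (∫ z in Dr, (f z * (starRingEnd ℂ) (P z)).re) +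
        ∫ z in Dr, ‖P z‖ ^ 2 := by
    simp_rw [hptw]
    have h1 : IntegrableOn (fun z => ‖f z‖ ^ 2 - 2 * (f z * (starRingEnd ℂ) (P z)).re) Dr :=
      hf2.sub (hfPre.const_mul 2)
    have h2 : IntegrableOn (fun z => 2 * (f z * (starRingEnd ℂ) (P z)).re) Dr :=
      hfPre.const_mul 2
    rw [MeasureTheory.integral_add h1 hP2, MeasureTheory.integral_sub hf2 h2,
      MeasureTheory.integral_const_mul]
  have hPL2 : ∫ z in Dr, ‖P z‖ ^ 2 = ∑ i ∈ T, ‖c i‖ ^ 2 * Cc r i := poly_L2 r hr T c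
  rw [hsplit, hBre, hPL2] at hpos
  linarith

end HadamardAux

/-- `L²` estimate for the truncated Hadamard quotient on the polydisc: if `f` is
continuous on the closed polydisc `D_s ⊂ ℂⁿ`, holomorphic on its interior, with Taylor
expansion `f(z) = Σ_i c_i z^i`, and if `S` is a finite set of nonzero multi-indices with
`|⟨α,i⟩| ≥ a` for all `i ∈ S`, then the polynomial `g(z) = Σ_{i∈S} (c_i/⟨α,i⟩) z^i`
satisfies `∫_{D_s} |g|² dV ≤ a⁻² ∫_{D_s} |f|² dV`. -/
theorem hadamard_quotient_L2_estimate {n : ℕ} (hn : 1 ≤ n) (s : ℝ) (hs : 0 < s)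
    (f : (Fin n → ℂ) → ℂ) (c : (Fin n → ℕ) → ℂ)
    (hcont : ContinuousOn f {z : Fin n → ℂ | ∀ j, ‖z j‖ ≤ s})
    (hdiff : DifferentiableOn ℂ f {z : Fin n → ℂ | ∀ j, ‖z j‖ < s})
    (hTaylor : ∀ z : Fin n → ℂ, (∀ j, ‖z j‖ < s) →
      HasSum (fun i : Fin n → ℕ => c i * ∏ j, z j ^ i j) (f z))
    (T : Finset (Fin n → ℕ)) (hT0 : ∀ i ∈ T, i ≠ 0)
    (α : Fin n → ℝ) (a : ℝ) (ha : 0 < a)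
    (hα : ∀ i ∈ T, a ≤ |∑ j, α j * (i j : ℝ)|) :
    ∫ z in {z : Fin n → ℂ | ∀ j, ‖z j‖ ≤ s},
        ‖∑ i ∈ T, c i / ((∑ j, α j * (i j : ℝ) : ℝ) : ℂ) * ∏ j, z j ^ i j‖ ^ 2
      ≤ (a ^ 2)⁻¹ *
        ∫ z in {z : Fin n → ℂ | ∀ j, ‖z j‖ ≤ s}, ‖f z‖ ^ 2 := by
  set I := ∫ z in {z : Fin n → ℂ | ∀ j, ‖z j‖ ≤ s}, ‖f z‖ ^ 2 with hI_def
  have hfint : IntegrableOn (fun z => ‖f z‖ ^ 2)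
      {z : Fin n → ℂ | ∀ j, ‖z j‖ ≤ s} :=
    (hcont.norm.pow 2).integrableOn_compact (Dset_compact s)
  -- Bessel at each radius r < s, then pass to the limit r → s⁻
  have hI : ∀ r ∈ Set.Ioo (0:ℝ) s, (∑ i ∈ T, ‖c i‖ ^ 2 * Cc r i) ≤ I := by
    intro r hr
    refine (bessel r hr.1 hr.2 f c hcont hTaylor T).trans ?_
    refine MeasureTheory.setIntegral_mono_set hfint
      (Filter.Eventually.of_forall fun z => sq_nonneg _) ?_
    exact (HasSubset.Subset.eventuallyLE fun z hz j => (hz j).trans hr.2.le)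
  have hGcont : Continuous fun r : ℝ => ∑ i ∈ T, ‖c i‖ ^ 2 * Cc r i := by
    refine continuous_finset_sum _ fun i _ => continuous_const.mul ?_
    exact continuous_finset_prod _ fun j _ =>
      ((continuous_const.mul (continuous_pow _)).div_const _)
  have htend : Filter.Tendsto (fun r : ℝ => ∑ i ∈ T, ‖c i‖ ^ 2 * Cc r i)
      (nhdsWithin s (Set.Iio s)) (nhds (∑ i ∈ T, ‖c i‖ ^ 2 * Cc s i)) :=
    (hGcont.tendsto s).mono_left nhdsWithin_le_nhds
  have hEv : ∀ᶠ r in nhdsWithin s (Set.Iio s), (∑ i ∈ T, ‖c i‖ ^ 2 * Cc r i) ≤ I := by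
    have h1 : ∀ᶠ r in nhdsWithin s (Set.Iio s), 0 < r :=
      (eventually_gt_nhds hs).filter_mono nhdsWithin_le_nhds
    have h2 : ∀ᶠ r in nhdsWithin s (Set.Iio s), r < s := eventually_mem_nhdsWithin
    filter_upwards [h1, h2] with r hr1 hr2 using hI r ⟨hr1, hr2⟩
  have hfinal : (∑ i ∈ T, ‖c i‖ ^ 2 * Cc s i) ≤ I := le_of_tendsto htend hEv
  -- compute the LHS via the monomial orthogonality
  rw [poly_L2 s hs T (fun i => c i / (((∑ j, α j * (i j : ℝ) : ℝ)) : ℂ))]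
  have hstep : ∀ i ∈ T, ‖c i / (((∑ j, α j * (i j : ℝ) : ℝ)) : ℂ)‖ ^ 2 * Cc s i ≤
      (a ^ 2)⁻¹ * (‖c i‖ ^ 2 * Cc s i) := by
    intro i hi
    have haS : a ≤ |∑ j, α j * (i j : ℝ)| := hα i hi
    have hCc : 0 ≤ Cc s i := (Cc_pos hs i).le
    rw [norm_div, Complex.norm_real, Real.norm_eq_abs]
    calc (‖c i‖ / |∑ j, α j * (i j : ℝ)|) ^ 2 * Cc s i
        = ‖c i‖ ^ 2 * Cc s i / |∑ j, α j * (i j : ℝ)| ^ 2 := by ring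
      _ ≤ ‖c i‖ ^ 2 * Cc s i / a ^ 2 := by
          apply div_le_div_of_nonneg_left (by positivity) (by positivity)
          nlinarith
      _ = (a ^ 2)⁻¹ * (‖c i‖ ^ 2 * Cc s i) := by ring
  calc ∑ i ∈ T, ‖c i / (((∑ j, α j * (i j : ℝ) : ℝ)) : ℂ)‖ ^ 2 * Cc s i
      ≤ ∑ i ∈ T, (a ^ 2)⁻¹ * (‖c i‖ ^ 2 * Cc s i) := Finset.sum_le_sum hstep
    _ = (a ^ 2)⁻¹ * ∑ i ∈ T, ‖c i‖ ^ 2 * Cc s i := by rw [Finset.mul_sum]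
    _ ≤ (a ^ 2)⁻¹ * I := by
        apply mul_le_mul_of_nonneg_left hfinal (by positivity)
end
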